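/- In a connected graph, if x and y are distinct vertices at the same distance ℓ ≥ 1 from a vertex r, then there exists an induced x–y path all of whose internal vertices are at distance strictly less than ℓ from r. -/

import Mathlib

open SimpleGraph

/-- Any segment of a walk gives a walk between the corresponding vertices
of the appropriate length. -/
private lemma exists_subwalk {W : Type*} {H : SimpleGraph W} {a b : W} (p : H.Walk a b) :
    ∀ i j : ℕ, i ≤ j → j ≤ p.length →
      ∃ q : H.Walk (p.getVert i) (p.getVert j), q.length = j - i := by
  induction p with
  | nil =>
    intro i j hij hj
    simp only [Walk.length_nil, Nat.le_zero] at hj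
    subst hj
    have : i = 0 := Nat.le_zero.mp hij
    subst this
    exact ⟨Walk.nil, by simp⟩
  | @cons a c b h q ih =>
    intro i j hij hj
    match i, j with
    | 0, 0 => exact ⟨Walk.nil, by simp⟩
    | 0, j + 1 =>
      obtain ⟨q', hq'⟩ := ih 0 j (Nat.zero_le _)
        (by simpa [Nat.succ_le_succ_iff] using hj)
      exact ⟨Walk.cons h (q'.copy q.getVert_zero rfl), by have h2 : (Walk.cons h (q'.copy q.getVert_zero rfl)).length = j + 1 := by simp [hq']
                                                          exact h2⟩
    | i + 1, j + 1 =>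
      obtain ⟨q', hq'⟩ := ih i j (by omega)
        (by simpa [Nat.succ_le_succ_iff] using hj)
      exact ⟨q', by have h2 : q'.length = j + 1 - (i + 1) := by omega
                    exact h2⟩

/-- On a length-minimal walk, the extended distance between the `i`-th and
`j`-th vertices equals `j - i`. -/
private lemma edist_getVert {W : Type*} {H : SimpleGraph W} {a b : W} (p : H.Walk a b)
    (hmin : ∀ q : H.Walk a b, p.length ≤ q.length) {i j : ℕ} (hij : i ≤ j)
    (hj : j ≤ p.length) :
    H.edist (p.getVert i) (p.getVert j) = (j - i : ℕ) := by
  obtain ⟨qd, hqd⟩ := exists_subwalk p i j hij hj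
  have hub : H.edist (p.getVert i) (p.getVert j) ≤ (j - i : ℕ) := by
    simpa [hqd] using SimpleGraph.edist_le qd
  refine le_antisymm hub ?_
  by_contra hlt
  push_neg at hlt
  have hfin : H.edist (p.getVert i) (p.getVert j) ≠ ⊤ :=
    fun h => by rw [h] at hlt; exact (not_top_lt hlt)
  obtain ⟨wd, hwd⟩ := SimpleGraph.exists_walk_of_edist_ne_top hfin
  have hdlt : wd.length < j - i := by
    rw [← hwd] at hlt
    exact_mod_cast hlt
  obtain ⟨qa, hqa⟩ := exists_subwalk p 0 i (Nat.zero_le _) (le_trans hij hj)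
  obtain ⟨qb, hqb⟩ := exists_subwalk p j p.length hj le_rfl
  have hcomp := hmin (((qa.copy p.getVert_zero rfl).append wd).append
    (qb.copy rfl p.getVert_length))
  simp only [Walk.length_append, Walk.length_copy] at hcomp
  omega

/-- A walk whose support lies in `S` yields reachability in the induced graph. -/
private lemma reach_induce {V : Type*} {G : SimpleGraph V} {S : Set V} :
    ∀ {a b : V} (w : G.Walk a b), (∀ v ∈ w.support, v ∈ S) →
      ∀ (ha : a ∈ S) (hb : b ∈ S), (G.induce S).Reachable ⟨a, ha⟩ ⟨b, hb⟩ := by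
  intro a b w
  induction w with
  | nil => intro _ ha hb; exact Reachable.refl _
  | @cons a c b h q ih =>
    intro hw ha hb
    have hc : c ∈ S := hw c (by simp)
    have hadj : (G.induce S).Adj ⟨a, ha⟩ ⟨c, hc⟩ := h
    exact hadj.reachable.trans (ih (fun v hv => hw v (by simp [hv])) hc hb)

/-- In a connected graph, two distinct vertices at equal distance `ℓ ≥ 1` from
`r` are joined by an induced path whose internal vertices are all at distance
strictly less than `ℓ` from `r`. -/
theorem up_path_exists {V : Type*} (G : SimpleGraph V) (hconn : G.Connected)
    (r x y : V) (ℓ : ℕ) (hℓ : 1 ≤ ℓ) (hxy : x ≠ y)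
    (hx : G.dist r x = ℓ) (hy : G.dist r y = ℓ) :
    ∃ n : ℕ, ∃ f : Fin (n + 1) → V,
      f 0 = x ∧ f (Fin.last n) = y ∧
      Function.Injective f ∧
      (∀ i j : Fin (n + 1), G.Adj (f i) (f j) ↔ ((i : ℕ) + 1 = j ∨ (j : ℕ) + 1 = i)) ∧
      ∀ i : Fin (n + 1), i ≠ 0 → i ≠ Fin.last n → G.dist r (f i) < ℓ := by
  classical
  set S : Set V := {v | G.dist r v < ℓ ∨ v = x ∨ v = y} with hSdef
  have hxS : x ∈ S := Or.inr (Or.inl rfl)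
  have hyS : y ∈ S := Or.inr (Or.inr rfl)
  obtain ⟨wx, hwx⟩ := hconn.exists_walk_length_eq_dist r x
  obtain ⟨wy, hwy⟩ := hconn.exists_walk_length_eq_dist r y
  rw [hx] at hwx
  rw [hy] at hwy
  -- vertices of a shortest walk from r are at distance < ℓ (except the endpoint)
  have hshort : ∀ (z : V) (w : G.Walk r z), w.length = ℓ →
      ∀ v ∈ w.support, v = z ∨ G.dist r v < ℓ := by
    intro z w hw v hv
    rcases Walk.mem_support_iff_exists_getVert.mp hv with ⟨k, hk, hkle⟩
    by_cases hkx : k = w.length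
    · subst hkx; rw [w.getVert_length] at hk; exact Or.inl hk.symm
    · right
      obtain ⟨q, hq⟩ := exists_subwalk w 0 k (Nat.zero_le _) hkle
      have hd : G.dist r v ≤ q.length := by
        have := SimpleGraph.dist_le (q.copy w.getVert_zero hk)
        simpa using this
      omega
  have hsup : ∀ v ∈ (wx.reverse.append wy).support, v ∈ S := by
    intro v hv
    rw [Walk.mem_support_append_iff] at hv
    rcases hv with hv | hv
    · rw [Walk.support_reverse, List.mem_reverse] at hv
      rcases hshort x wx hwx v hv with h | h
      · exact h ▸ hxS
      · exact Or.inl h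
    · rcases hshort y wy hwy v hv with h | h
      · exact h ▸ hyS
      · exact Or.inl h
  have hreach : (G.induce S).Reachable ⟨x, hxS⟩ ⟨y, hyS⟩ :=
    reach_induce (wx.reverse.append wy) hsup hxS hyS
  obtain ⟨p, hp⟩ := hreach.exists_walk_length_eq_dist
  have hmin : ∀ q : (G.induce S).Walk ⟨x, hxS⟩ ⟨y, hyS⟩, p.length ≤ q.length :=
    fun q => hp ▸ SimpleGraph.dist_le q
  have key : ∀ i j : ℕ, i ≤ j → j ≤ p.length →
      (G.induce S).edist (p.getVert i) (p.getVert j) = (j - i : ℕ) :=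
    fun i j h1 h2 => edist_getVert p hmin h1 h2
  refine ⟨p.length, fun i => (p.getVert (i : ℕ) : V), ?_, ?_, ?_, ?_, ?_⟩
  · simp
  · simp
  · -- injectivity
    intro i j hij
    have hij' : p.getVert (i : ℕ) = p.getVert (j : ℕ) := Subtype.coe_injective hij
    have hzero : ∀ a b : Fin (p.length + 1), (a : ℕ) ≤ b →
        p.getVert (a : ℕ) = p.getVert (b : ℕ) → a = b := by
      intro a b hab hgv
      have hk := key a b hab (Nat.lt_succ_iff.mp b.isLt)
      rw [hgv, SimpleGraph.edist_self] at hk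
      have : (b : ℕ) - (a : ℕ) = 0 := by exact_mod_cast hk.symm
      exact Fin.ext (by omega)
    rcases le_total (i : ℕ) (j : ℕ) with h | h
    · exact hzero i j h hij'
    · exact (hzero j i h hij'.symm).symm
  · -- adjacency characterization
    have hiff : ∀ a b : Fin (p.length + 1), (a : ℕ) ≤ b →
        (G.Adj (p.getVert (a : ℕ) : V) (p.getVert (b : ℕ) : V) ↔ (b : ℕ) = (a : ℕ) + 1) := by
      intro a b hab
      rw [show G.Adj (p.getVert (a : ℕ) : V) (p.getVert (b : ℕ) : V) ↔
            (G.induce S).Adj (p.getVert (a : ℕ)) (p.getVert (b : ℕ)) from Iff.rfl,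
          ← SimpleGraph.edist_eq_one_iff_adj, key a b hab (Nat.lt_succ_iff.mp b.isLt),
          show (1 : ℕ∞) = ((1 : ℕ) : ℕ∞) from rfl, Nat.cast_inj]
      omega
    intro i j
    rcases le_total (i : ℕ) (j : ℕ) with h | h
    · rw [hiff i j h]; omega
    · rw [G.adj_comm, hiff j i h]; omega
  · -- internal vertices
    intro i hi0 hil
    rcases (p.getVert (i : ℕ)).2 with h | h | h
    · exact h
    · exfalso
      apply hi0
      have hk := key 0 (i : ℕ) (Nat.zero_le _) (Nat.lt_succ_iff.mp i.isLt)
      rw [show p.getVert (i : ℕ) = ⟨x, hxS⟩ from Subtype.ext h, p.getVert_zero,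
        SimpleGraph.edist_self] at hk
      have : (i : ℕ) - 0 = 0 := by exact_mod_cast hk.symm
      exact Fin.ext (by simpa using this)
    · exfalso
      apply hil
      have hk := key (i : ℕ) p.length (Nat.lt_succ_iff.mp i.isLt) le_rfl
      rw [show p.getVert (i : ℕ) = ⟨y, hyS⟩ from Subtype.ext h, p.getVert_length,
        SimpleGraph.edist_self] at hk
      have : p.length - (i : ℕ) = 0 := by exact_mod_cast hk.symm
      have hlast : (i : ℕ) = p.length := by have := Nat.lt_succ_iff.mp i.isLt; omega
      exact Fin.ext (by simpa [Fin.last] using hlast)
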